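/- Assume in addition that X is a Hilbert space. Then ε_L = inf{ sup{ ‖u − Σ_{j=1}^k l_j(u)·φ_j‖_Y : u ∈ X, ‖u‖_X ≤ 1 } : φ_1, …, φ_k ∈ X }; that is, the completeness defect ε_L is the best possible global error of approximation in Y of elements of the unit ball of X by elements of the form Σ_{j=1}^k l_j(u)·φ_j. -/

import Mathlib

open Filter

/-- Assume in addition that `X` is a (real) Hilbert space.  Then the
completeness defect `εL` equals the best possible global error of approximation in `Y`
of elements of the unit ball of `X` by elements of the form `∑ j, l j u • φ j`:
`εL = inf_{φ 1, …, φ k ∈ X} sup { ‖u − ∑ j, l j u • φ j‖_Y : u ∈ X, ‖u‖_X ≤ 1 }`. -/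
theorem statement2
    {X Y : Type*} [NormedAddCommGroup X] [InnerProductSpace ℝ X] [CompleteSpace X]
    [NormedAddCommGroup Y] [NormedSpace ℝ Y]
    (e : X →L[ℝ] Y) (he : Function.Injective e)
    {k : ℕ} (hk : 0 < k) (l : Fin k → (X →L[ℝ] ℝ))
    (hl : LinearIndependent ℝ l)
    (εL : ℝ)
    (hεL : εL = sSup {r : ℝ | ∃ w : X, (∀ j, l j w = 0) ∧ ‖w‖ ≤ 1 ∧ r = ‖e w‖}) :
    εL = sInf {r : ℝ | ∃ φ : Fin k → X,
          r = sSup {s : ℝ | ∃ u : X, ‖u‖ ≤ 1 ∧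
                s = ‖e (u - ∑ j, l j u • φ j)‖}} := by
  classical
  set A : Set ℝ := {r : ℝ | ∃ w : X, (∀ j, l j w = 0) ∧ ‖w‖ ≤ 1 ∧ r = ‖e w‖} with hA
  set S : (Fin k → X) → Set ℝ := fun φ =>
    {s : ℝ | ∃ u : X, ‖u‖ ≤ 1 ∧ s = ‖e (u - ∑ j, l j u • φ j)‖} with hS
  -- basic facts about the sets
  have hAne : A.Nonempty := ⟨‖e 0‖, 0, fun j => map_zero _, by simp, rfl⟩
  have hAbdd : BddAbove A := by
    refine ⟨‖e‖, fun r hr => ?_⟩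
    obtain ⟨w, _, hw1, rfl⟩ := hr
    calc ‖e w‖ ≤ ‖e‖ * ‖w‖ := e.le_opNorm w
    _ ≤ ‖e‖ * 1 := by gcongr
    _ = ‖e‖ := mul_one _
  have hSne : ∀ φ, (S φ).Nonempty := fun φ =>
    ⟨‖e (0 - ∑ j, l j (0 : X) • φ j)‖, 0, by simp, rfl⟩
  have hSbdd : ∀ φ, BddAbove (S φ) := by
    intro φ
    refine ⟨‖e‖ * (1 + ∑ j, ‖l j‖ * ‖φ j‖), fun s hs => ?_⟩
    obtain ⟨u, hu, rfl⟩ := hs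
    have h1 : ‖u - ∑ j, l j u • φ j‖ ≤ 1 + ∑ j, ‖l j‖ * ‖φ j‖ := by
      refine (norm_sub_le _ _).trans (add_le_add hu ?_)
      refine (norm_sum_le _ _).trans (Finset.sum_le_sum fun j _ => ?_)
      rw [norm_smul]
      have h2 : ‖l j u‖ ≤ ‖l j‖ := by
        calc ‖l j u‖ ≤ ‖l j‖ * ‖u‖ := (l j).le_opNorm u
        _ ≤ ‖l j‖ * 1 := by gcongr
        _ = ‖l j‖ := mul_one _
      exact mul_le_mul_of_nonneg_right h2 (norm_nonneg _)
    calc ‖e (u - ∑ j, l j u • φ j)‖ ≤ ‖e‖ * ‖u - ∑ j, l j u • φ j‖ := e.le_opNorm _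
    _ ≤ ‖e‖ * (1 + ∑ j, ‖l j‖ * ‖φ j‖) :=
        mul_le_mul_of_nonneg_left h1 e.opNorm_nonneg
  have hAS : ∀ φ, A ⊆ S φ := by
    intro φ r hr
    obtain ⟨w, hw0, hw1, rfl⟩ := hr
    exact ⟨w, hw1, by simp [hw0]⟩
  -- `εL ≤` every element of the inf-set
  have hle : ∀ φ, εL ≤ sSup (S φ) := fun φ => by
    rw [hεL]; exact csSup_le_csSup (hSbdd φ) hAne (hAS φ)
  -- the good φ₀
  set K : Submodule ℝ X := ⨅ j, LinearMap.ker (l j : X →ₗ[ℝ] ℝ) with hK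
  have hKmem : ∀ {w : X}, w ∈ K ↔ ∀ j, l j w = 0 := by
    intro w
    simp [hK, Submodule.mem_iInf, LinearMap.mem_ker]
  have hKc : IsClosed (K : Set X) := by
    have h : (K : Set X) = ⋂ j, (LinearMap.ker (l j : X →ₗ[ℝ] ℝ) : Set X) := by
      simp [hK, Submodule.coe_iInf]
    rw [h]
    exact isClosed_iInter fun j => ContinuousLinearMap.isClosed_ker (l j)
  haveI : CompleteSpace K := hKc.completeSpace_coe
  -- the joint map T
  set T : X →ₗ[ℝ] (Fin k → ℝ) := LinearMap.pi (fun j => (l j : X →ₗ[ℝ] ℝ)) with hT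
  have hTapp : ∀ (u : X) (j : Fin k), T u j = l j u := fun u j => rfl
  have hTK : ∀ w ∈ K, T w = 0 := by
    intro w hw
    funext j
    simpa [hTapp] using (hKmem.mp hw) j
  have hdecomp : ∀ a : Fin k → ℝ, a = ∑ j, a j • (Pi.single j (1 : ℝ) : Fin k → ℝ) := by
    intro a
    funext i
    simp [Finset.sum_apply, Pi.single_apply]
  -- T is surjective since the functionals are linearly independent
  have hTsurj : Function.Surjective T := by
    rw [← LinearMap.range_eq_top]
    by_contra hne
    obtain ⟨f, hf0, hfbot⟩ :=
      (LinearMap.range T).exists_dual_map_eq_bot_of_lt_top (lt_top_iff_ne_top.mpr hne)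
        inferInstance
    have hfT : ∀ u : X, f (T u) = 0 := by
      intro u
      have hm : f (T u) ∈ (LinearMap.range T).map f :=
        Submodule.mem_map_of_mem (LinearMap.mem_range_self _ u)
      rw [hfbot] at hm
      simpa using hm
    have hsum : ∀ u : X, (∑ j, f (Pi.single j 1) • l j) u = 0 := by
      intro u
      have h := hfT u
      rw [hdecomp (T u)] at h
      simp only [map_sum, map_smul, smul_eq_mul] at h
      simpa [ContinuousLinearMap.sum_apply, ContinuousLinearMap.smul_apply,
        smul_eq_mul, hTapp, mul_comm] using h
    have hcoef : ∀ j, f (Pi.single j 1) = 0 := by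
      have h0 : ∑ j, f (Pi.single j 1) • l j = 0 := by
        ext u; simpa using hsum u
      exact fun j => Fintype.linearIndependent_iff.mp hl _ h0 j
    refine hf0 (LinearMap.ext fun v => ?_)
    rw [hdecomp v]
    simp [hcoef]
  -- restriction of T to the orthogonal complement
  set g : Kᗮ →ₗ[ℝ] (Fin k → ℝ) := T.domRestrict Kᗮ with hg
  have hgapp : ∀ v : Kᗮ, g v = T (v : X) := fun v => rfl
  have hginj : Function.Injective g := by
    rw [← LinearMap.ker_eq_bot, Submodule.eq_bot_iff]
    rintro ⟨v, hv⟩ hv0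
    have hv0' : T v = 0 := hv0
    have hvK : v ∈ K := hKmem.mpr fun j => by
      simpa [hTapp] using congrFun hv0' j
    have hmem : v ∈ K ⊓ Kᗮ := ⟨hvK, hv⟩
    rw [K.inf_orthogonal_eq_bot] at hmem
    exact Subtype.ext ((Submodule.mem_bot ℝ).mp hmem)
  have hgsurj : Function.Surjective g := by
    intro a
    obtain ⟨u, hu⟩ := hTsurj a
    refine ⟨⟨u - (K.orthogonalProjectionOnto u : X),
      K.sub_starProjection_mem_orthogonal u⟩, ?_⟩
    rw [hgapp]
    simp only [map_sub]
    rw [hTK _ (K.orthogonalProjectionOnto u).2, hu, sub_zero]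
  set E : Kᗮ ≃ₗ[ℝ] (Fin k → ℝ) := LinearEquiv.ofBijective g ⟨hginj, hgsurj⟩ with hE
  set φ₀ : Fin k → X := fun j => (E.symm (Pi.single j 1) : X) with hφ₀
  -- the key identity
  have hkey : ∀ u : X, ∑ j, l j u • φ₀ j = u - (K.orthogonalProjectionOnto u : X) := by
    intro u
    set v : Kᗮ := ⟨u - (K.orthogonalProjectionOnto u : X),
      K.sub_starProjection_mem_orthogonal u⟩ with hv
    have hEv : E v = T u := by
      show g v = T u
      rw [hgapp]
      simp only [hv, map_sub]
      rw [hTK _ (K.orthogonalProjectionOnto u).2, sub_zero]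
    have hsymm : E.symm (T u) = v := by
      rw [← hEv, LinearEquiv.symm_apply_apply]
    have h1 : ∑ j, l j u • φ₀ j = ((∑ j, (T u j) • E.symm ((Pi.single j (1 : ℝ) : Fin k → ℝ)) : Kᗮ) : X) := by
      rw [Submodule.coe_sum]
      exact Finset.sum_congr rfl fun j _ => by rw [hTapp]; rfl
    rw [h1]
    have h2 : (∑ j, (T u j) • E.symm ((Pi.single j (1 : ℝ) : Fin k → ℝ)) : Kᗮ) = E.symm (T u) := by
      calc (∑ j, (T u j) • E.symm ((Pi.single j (1 : ℝ) : Fin k → ℝ)) : Kᗮ)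
          = E.symm (∑ j, (T u j) • (Pi.single j (1 : ℝ) : Fin k → ℝ)) := by
            rw [map_sum]
            exact Finset.sum_congr rfl fun j _ => (map_smul _ _ _).symm
        _ = E.symm (T u) := by rw [← hdecomp (T u)]
    rw [h2, hsymm]
  -- for the good φ₀, the sup-set is contained in A
  have hSsub : S φ₀ ⊆ A := by
    intro s hs
    obtain ⟨u, hu, rfl⟩ := hs
    refine ⟨(K.orthogonalProjectionOnto u : X),
      fun j => (hKmem.mp (K.orthogonalProjectionOnto u).2) j, ?_, ?_⟩
    · calc ‖((K.orthogonalProjectionOnto u : K) : X)‖ = ‖K.orthogonalProjectionOnto u‖ := rfl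
      _ ≤ ‖K.orthogonalProjectionOnto‖ * ‖u‖ := (K.orthogonalProjectionOnto).le_opNorm u
      _ ≤ 1 * ‖u‖ :=
          mul_le_mul_of_nonneg_right (K.orthogonalProjectionOnto_norm_le) (norm_nonneg _)
      _ = ‖u‖ := one_mul _
      _ ≤ 1 := hu
    · have harg : u - ∑ j, l j u • φ₀ j = ((K.orthogonalProjectionOnto u : K) : X) := by
        rw [hkey]; abel
      rw [harg]
  have hfin : sSup (S φ₀) ≤ εL := by
    rw [hεL]
    exact csSup_le_csSup hAbdd (hSne φ₀) hSsub
  -- conclusion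
  have hbddI : BddBelow {r : ℝ | ∃ φ : Fin k → X, r = sSup (S φ)} := by
    refine ⟨0, ?_⟩
    rintro r ⟨φ, rfl⟩
    obtain ⟨s, hs⟩ := hSne φ
    have h0s : 0 ≤ s := by
      obtain ⟨u, _, rfl⟩ := hs
      exact norm_nonneg _
    exact h0s.trans (le_csSup (hSbdd φ) hs)
  refine le_antisymm ?_ ?_
  · refine le_csInf ⟨sSup (S φ₀), φ₀, rfl⟩ ?_
    rintro r ⟨φ, rfl⟩
    exact hle φ
  · exact (csInf_le hbddI ⟨φ₀, rfl⟩).trans hfin
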